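/- For every multiplicatively antisymmetric μ, the quantum exterior algebra Λ_μ = sCl(μ, 0) has full dimension: its 𝕜-vector-space dimension equals 2^n. (Example 3.4.) -/

import Mathlib

open FreeAlgebra

/-- `μ` is multiplicatively antisymmetric: `μ i j * μ j i = 1` and `μ i i = 1`. -/
def MulAntisym {𝕜 : Type*} [Field 𝕜] {n : ℕ} (μ : Fin n → Fin n → 𝕜) : Prop :=
  ∀ i j, μ i j * μ j i = 1 ∧ μ i i = 1

/-- `B` is `μ`-symmetric: `B i j = μ i j * B j i`. -/
def MuSymm {𝕜 : Type*} [Field 𝕜] {n : ℕ} (μ B : Fin n → Fin n → 𝕜) : Prop :=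
  ∀ i j, B i j = μ i j * B j i

/-- Condition (★): for all `i, j` with `B i j ≠ 0`, one has `μ i k = μ k j` for all `k`. -/
def StarCond {𝕜 : Type*} [Field 𝕜] {n : ℕ} (μ B : Fin n → Fin n → 𝕜) : Prop :=
  ∀ i j, B i j ≠ 0 → ∀ k, μ i k = μ k j

/-- The defining relations of the skew Clifford algebra: identifying
`x_i x_j + μ i j • (x_j x_i)` with `(2 * B i j) • 1`, which amounts to quotienting the free
algebra by the two-sided ideal generated by
`x_i x_j + μ i j • (x_j x_i) - (2 * B i j) • 1`. -/
inductive sClRel (𝕜 : Type*) [Field 𝕜] (n : ℕ) (μ B : Fin n → Fin n → 𝕜) :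
    FreeAlgebra 𝕜 (Fin n) → FreeAlgebra 𝕜 (Fin n) → Prop
  | rel (i j : Fin n) : sClRel 𝕜 n μ B
      (ι 𝕜 i * ι 𝕜 j + μ i j • (ι 𝕜 j * ι 𝕜 i))
      ((2 * B i j) • (1 : FreeAlgebra 𝕜 (Fin n)))

/-- The skew Clifford algebra `sCl(μ, B)`. -/
abbrev sCl (𝕜 : Type*) [Field 𝕜] (n : ℕ) (μ B : Fin n → Fin n → 𝕜) : Type _ :=
  RingQuot (sClRel 𝕜 n μ B)

/-- The image `x̄_i` of the generator `x_i` in the skew Clifford algebra. -/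
noncomputable def sClGen (𝕜 : Type*) [Field 𝕜] (n : ℕ) (μ B : Fin n → Fin n → 𝕜)
    (i : Fin n) : sCl 𝕜 n μ B :=
  RingQuot.mkAlgHom 𝕜 (sClRel 𝕜 n μ B) (ι 𝕜 i)
noncomputable section QEA

variable {𝕜 : Type*} [Field 𝕜] {n : ℕ} (μ : Fin n → Fin n → 𝕜)

/-- Coefficient of the action of `x_i` on the basis vector `e_S`. -/
def coefQ (i : Fin n) (S : Finset (Fin n)) : 𝕜 := ∏ k ∈ S.filter (· < i), (-μ i k)

lemma coefQ_ne_zero (hμ : MulAntisym μ) (i : Fin n) (S : Finset (Fin n)) :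
    coefQ μ i S ≠ 0 := by
  refine Finset.prod_ne_zero_iff.2 fun k _ => ?_
  have h1 := (hμ i k).1
  intro h
  rw [neg_eq_zero] at h
  rw [h, zero_mul] at h1
  exact zero_ne_one h1

lemma coefQ_insert_lt {i j : Fin n} (S : Finset (Fin n)) (hj : j ∉ S) (h : j < i) :
    coefQ μ i (insert j S) = (-μ i j) * coefQ μ i S := by
  unfold coefQ
  rw [Finset.filter_insert, if_pos h, Finset.prod_insert (by simp [hj])]

lemma coefQ_insert_not_lt {i j : Fin n} (S : Finset (Fin n)) (h : ¬ j < i) :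
    coefQ μ i (insert j S) = coefQ μ i S := by
  unfold coefQ
  rw [Finset.filter_insert, if_neg h]

lemma coefQ_scalar_rel (hμ : MulAntisym μ) {i j : Fin n} (hij : i ≠ j) (S : Finset (Fin n))
    (hi : i ∉ S) (hj : j ∉ S) :
    coefQ μ i (insert j S) * coefQ μ j S
      + μ i j * (coefQ μ j (insert i S) * coefQ μ i S) = 0 := by
  rcases lt_or_gt_of_ne hij with h | h
  · rw [coefQ_insert_not_lt μ S (not_lt.2 h.le), coefQ_insert_lt μ S hi h]
    have h1 := (hμ i j).1
    linear_combination (-(coefQ μ i S * coefQ μ j S)) * h1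
  · rw [coefQ_insert_lt μ S hj h, coefQ_insert_not_lt μ S (not_lt.2 h.le)]
    ring

/-- The operator by which `x_i` acts on `Finset (Fin n) → 𝕜`. -/
def opF (i : Fin n) : Module.End 𝕜 (Finset (Fin n) → 𝕜) where
  toFun v := fun T => if i ∈ T then coefQ μ i (T.erase i) * v (T.erase i) else 0
  map_add' v w := by funext T; by_cases h : i ∈ T <;> simp [h, mul_add]
  map_smul' a v := by
    funext T; by_cases h : i ∈ T <;> simp [h]
    ring

lemma opF_rel (hμ : MulAntisym μ) (i j : Fin n) :
    opF μ i * opF μ j + μ i j • (opF μ j * opF μ i) = 0 := by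
  apply LinearMap.ext; intro v; funext T
  simp only [LinearMap.add_apply, LinearMap.smul_apply, Module.End.mul_apply,
    LinearMap.zero_apply, opF, LinearMap.coe_mk, AddHom.coe_mk, Pi.add_apply,
    Pi.smul_apply, Pi.zero_apply, smul_eq_mul]
  by_cases hij : i = j
  · subst hij
    by_cases h : i ∈ T <;> simp [h, Finset.notMem_erase]
  · by_cases hi : i ∈ T
    · by_cases hj : j ∈ T
      · have hji : j ∈ T.erase i := Finset.mem_erase.2 ⟨fun h => hij (h ▸ rfl), hj⟩
        have hij' : i ∈ T.erase j := Finset.mem_erase.2 ⟨hij, hi⟩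
        rw [if_pos hi, if_pos hj, if_pos hji, if_pos hij']
        set S := (T.erase i).erase j with hS
        have hcomm : (T.erase j).erase i = S := by ext x; simp [hS, Finset.mem_erase]; tauto
        rw [hcomm]
        have hiS : i ∉ S := by simp [hS, Finset.mem_erase]
        have hjS : j ∉ S := Finset.notMem_erase _ _
        have h1 : T.erase i = insert j S := by rw [hS, Finset.insert_erase hji]
        have h2 : T.erase j = insert i S := by
          rw [← hcomm, Finset.insert_erase hij']
        rw [h1, h2]
        have key := coefQ_scalar_rel μ hμ hij S hiS hjS
        linear_combination v S * key
      · have : j ∉ T.erase i := fun h => hj (Finset.mem_of_mem_erase h)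
        rw [if_pos hi, if_neg hj, if_neg this, mul_zero, mul_zero, add_zero]
    · by_cases hj : j ∈ T
      · have : i ∉ T.erase j := fun h => hi (Finset.mem_of_mem_erase h)
        rw [if_neg hi, if_pos hj, if_neg this, mul_zero, mul_zero, zero_add]
      · rw [if_neg hi, if_neg hj, mul_zero, add_zero]

variable (𝕜 n) in
/-- The representation of the quantum exterior algebra on `Finset (Fin n) → 𝕜`. -/
def phiQ (hμ : MulAntisym μ) :
    sCl 𝕜 n μ (fun _ _ => 0) →ₐ[𝕜] Module.End 𝕜 (Finset (Fin n) → 𝕜) :=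
  RingQuot.liftAlgHom 𝕜 ⟨FreeAlgebra.lift 𝕜 (opF μ), by
    rintro a b ⟨i, j⟩
    simp only [map_add, map_mul, map_smul, FreeAlgebra.lift_ι_apply, mul_zero, zero_smul, map_zero]
    exact opF_rel μ hμ i j⟩


lemma opF_single {i : Fin n} {T : Finset (Fin n)} (hi : i ∉ T) :
    opF μ i (Pi.single T (1:𝕜)) = coefQ μ i T • (Pi.single (insert i T) 1 : Finset (Fin n) → 𝕜) := by
  funext U
  simp only [opF, LinearMap.coe_mk, AddHom.coe_mk, Pi.smul_apply, smul_eq_mul]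
  by_cases h : i ∈ U
  · by_cases hU : U.erase i = T
    · have hUeq : U = insert i T := by rw [← hU, Finset.insert_erase h]
      rw [if_pos h, hU, hUeq]
      simp
    · have hne : U ≠ insert i T := fun hEq => hU (by rw [hEq, Finset.erase_insert hi])
      rw [if_pos h, Pi.single_eq_of_ne hU, Pi.single_eq_of_ne hne, mul_zero, mul_zero]
  · have hne : U ≠ insert i T := fun hEq => h (hEq ▸ Finset.mem_insert_self i T)
    rw [if_neg h, Pi.single_eq_of_ne hne, mul_zero]

lemma prod_opF_single (hμ : MulAntisym μ) :
    ∀ l : List (Fin n), l.Pairwise (· < ·) →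
      ∃ c : 𝕜, c ≠ 0 ∧
        ((l.map (opF μ)).prod) (Pi.single ∅ (1:𝕜)) = c • (Pi.single l.toFinset 1 : Finset (Fin n) → 𝕜) := by
  intro l
  induction l with
  | nil => exact fun _ => ⟨1, one_ne_zero, by simp⟩
  | cons i l ih =>
    intro hs
    obtain ⟨c, hc, heq⟩ := ih hs.of_cons
    have hi : i ∉ l.toFinset := by
      intro h
      exact lt_irrefl i (List.rel_of_pairwise_cons hs (List.mem_toFinset.1 h))
    refine ⟨c * coefQ μ i l.toFinset, mul_ne_zero hc (coefQ_ne_zero μ hμ _ _), ?_⟩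
    rw [List.map_cons, List.prod_cons, Module.End.mul_apply, heq, map_smul,
      opF_single μ hi, List.toFinset_cons, smul_smul]

section Gen

variable (hμ : MulAntisym μ) (hchar : (2:𝕜) ≠ 0)

local notation "g" => sClGen 𝕜 n μ (fun _ _ => 0)

lemma gen_rel (i j : Fin n) : g i * g j + μ i j • (g j * g i) = 0 := by
  have h := RingQuot.mkAlgHom_rel 𝕜 (@sClRel.rel 𝕜 _ n μ (fun _ _ => 0) i j)
  simpa only [sClGen, map_add, map_mul, map_smul, mul_zero, zero_smul, map_zero] using h

lemma gen_swap (i j : Fin n) : g i * g j = (-(μ i j)) • (g j * g i) :=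
  (eq_neg_of_add_eq_zero_left (gen_rel μ i j)).trans (neg_smul (μ i j) (g j * g i)).symm

include hμ hchar in
lemma gen_sq (i : Fin n) : g i * g i = 0 := by
  have h := gen_rel μ i i
  rw [(hμ i i).2, one_smul, ← two_smul 𝕜] at h
  have h2 := congrArg (fun y => (2:𝕜)⁻¹ • y) h
  simpa [smul_smul, inv_mul_cancel₀ hchar] using h2

include hμ hchar in
lemma gen_mul_prod_of_mem (i : Fin n) :
    ∀ l : List (Fin n), i ∈ l → g i * (l.map g).prod = 0 := by
  intro l
  induction l with
  | nil => simp
  | cons j l ih =>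
    intro hmem
    rw [List.map_cons, List.prod_cons, ← mul_assoc]
    by_cases hij : i = j
    · subst hij
      rw [gen_sq μ hμ hchar, zero_mul]
    · have hi : i ∈ l := by
        rcases List.mem_cons.1 hmem with h | h
        · exact absurd h hij
        · exact h
      rw [gen_swap μ, smul_mul_assoc, mul_assoc, ih hi, mul_zero, smul_zero]

include hμ in
lemma gen_mul_prod_of_not_mem (i : Fin n) :
    ∀ l : List (Fin n), i ∉ l →
      ∃ c : 𝕜, c ≠ 0 ∧ g i * (l.map g).prod
        = c • (((l.orderedInsert (· ≤ ·) i).map g).prod) := by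
  intro l
  induction l with
  | nil => exact fun _ => ⟨1, one_ne_zero, by simp⟩
  | cons j l ih =>
    intro hmem
    have hij : i ≠ j := fun h => hmem (h ▸ List.mem_cons_self)
    have hil : i ∉ l := fun h => hmem (List.mem_cons_of_mem _ h)
    by_cases hle : i ≤ j
    · refine ⟨1, one_ne_zero, ?_⟩
      simp only [List.orderedInsert, if_pos hle, one_smul, List.map_cons, List.prod_cons]
    · obtain ⟨c, hc, heq⟩ := ih hil
      have hμij : -μ i j ≠ 0 := by
        have h1 := (hμ i j).1
        intro h
        rw [neg_eq_zero] at h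
        rw [h, zero_mul] at h1
        exact zero_ne_one h1
      refine ⟨(-(μ i j)) * c, mul_ne_zero hμij hc, ?_⟩
      simp only [List.orderedInsert, if_neg hle, List.map_cons, List.prod_cons]
      rw [← mul_assoc, gen_swap μ, smul_mul_assoc, mul_assoc, heq, mul_smul_comm, smul_smul]

end Gen

lemma sort_insert_eq {i : Fin n} {S : Finset (Fin n)} (hi : i ∉ S) :
    Finset.sort (insert i S) (· ≤ ·) = (Finset.sort S (· ≤ ·)).orderedInsert (· ≤ ·) i := by
  apply List.Perm.eq_of_pairwise' (Finset.pairwise_sort _ _)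
    ((Finset.pairwise_sort S _).orderedInsert i _)
  refine (Finset.sort_perm_toList _ _).trans ((Finset.toList_insert hi).trans ?_)
  exact (List.Perm.cons i (Finset.sort_perm_toList S _).symm).trans
    (List.perm_orderedInsert _ _ _).symm

variable (𝕜 n) in
/-- The monomial basis candidate indexed by subsets. -/
def mQ (S : Finset (Fin n)) : sCl 𝕜 n μ (fun _ _ => 0) :=
  ((S.sort (· ≤ ·)).map (sClGen 𝕜 n μ (fun _ _ => 0))).prod

lemma gen_mul_mQ_mem (hμ : MulAntisym μ) (hchar : (2:𝕜) ≠ 0) (i : Fin n) (S : Finset (Fin n)) :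
    sClGen 𝕜 n μ (fun _ _ => 0) i * mQ 𝕜 n μ S ∈
      Submodule.span 𝕜 (Set.range (mQ 𝕜 n μ)) := by
  by_cases hi : i ∈ S
  · rw [mQ, gen_mul_prod_of_mem μ hμ hchar i _ ((Finset.mem_sort _).2 hi)]
    exact Submodule.zero_mem _
  · obtain ⟨c, hc, heq⟩ := gen_mul_prod_of_not_mem μ hμ i (S.sort (· ≤ ·))
      (fun h => hi ((Finset.mem_sort _).1 h))
    rw [mQ, heq, ← sort_insert_eq hi]
    exact Submodule.smul_mem _ c (Submodule.subset_span ⟨insert i S, rfl⟩)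

lemma span_mQ_top (hμ : MulAntisym μ) (hchar : (2:𝕜) ≠ 0) :
    Submodule.span 𝕜 (Set.range (mQ 𝕜 n μ)) = ⊤ := by
  rw [eq_top_iff]
  set P := Submodule.span 𝕜 (Set.range (mQ 𝕜 n μ)) with hP
  have key : ∀ l : List (sCl 𝕜 n μ (fun _ _ => 0)),
      (∀ y ∈ l, y ∈ Set.range (sClGen 𝕜 n μ (fun _ _ => 0))) → l.prod ∈ P := by
    intro l
    induction l with
    | nil =>
      intro _
      rw [List.prod_nil]
      have h1 : (1 : sCl 𝕜 n μ (fun _ _ => 0)) = mQ 𝕜 n μ ∅ := by simp [mQ]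
      rw [h1]
      exact Submodule.subset_span ⟨∅, rfl⟩
    | cons a l ih =>
      intro hl
      obtain ⟨i, rfl⟩ := hl a (List.mem_cons_self)
      have hm : l.prod ∈ P := ih (fun y hy => hl y (List.mem_cons_of_mem _ hy))
      rw [List.prod_cons]
      have h2 : (LinearMap.mulLeft 𝕜 (sClGen 𝕜 n μ (fun _ _ => 0) i)) l.prod ∈
          Submodule.map (LinearMap.mulLeft 𝕜 (sClGen 𝕜 n μ (fun _ _ => 0) i)) P :=
        ⟨l.prod, hm, rfl⟩
      rw [hP, Submodule.map_span] at h2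
      have hle : Submodule.span 𝕜
          ((LinearMap.mulLeft 𝕜 (sClGen 𝕜 n μ (fun _ _ => 0) i)) '' Set.range (mQ 𝕜 n μ)) ≤ P := by
        rw [Submodule.span_le]
        rintro _ ⟨_, ⟨S, rfl⟩, rfl⟩
        exact gen_mul_mQ_mem μ hμ hchar i S
      exact hle h2
  have hadj : Algebra.adjoin 𝕜 (Set.range (sClGen 𝕜 n μ (fun _ _ => 0))) = ⊤ := by
    have h3 : Set.range (sClGen 𝕜 n μ (fun _ _ => 0))
        = (RingQuot.mkAlgHom 𝕜 (sClRel 𝕜 n μ (fun _ _ => 0))) '' Set.range (ι 𝕜) := by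
      rw [← Set.range_comp]; rfl
    rw [h3, ← AlgHom.map_adjoin, FreeAlgebra.adjoin_range_ι, Algebra.map_top,
      AlgHom.range_eq_top]
    exact RingQuot.mkAlgHom_surjective 𝕜 _
  intro x _
  have hx : x ∈ Subalgebra.toSubmodule (Algebra.adjoin 𝕜
      (Set.range (sClGen 𝕜 n μ (fun _ _ => 0)))) := by
    rw [hadj]
    simp
  rw [Algebra.adjoin_eq_span] at hx
  refine Submodule.span_le.2 ?_ hx
  intro y hy
  obtain ⟨l, hl, rfl⟩ := Submonoid.exists_list_of_mem_closure hy
  exact key l hl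

end QEA

/-- Example 3.4: the quantum exterior algebra `Λ_μ = sCl(μ, 0)` has full dimension
`2 ^ n`. -/
theorem quantum_exterior_full_dimension
    (𝕜 : Type*) [Field 𝕜] (hchar : (2 : 𝕜) ≠ 0) (n : ℕ) (hn : 1 ≤ n)
    (μ : Fin n → Fin n → 𝕜) (hμ : MulAntisym μ) :
    Module.finrank 𝕜 (sCl 𝕜 n μ (fun _ _ => 0)) = 2 ^ n := by
  classical
  let Φ := phiQ 𝕜 n μ hμ
  let E : sCl 𝕜 n μ (fun _ _ => 0) →ₗ[𝕜] (Finset (Fin n) → 𝕜) :=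
    (LinearMap.applyₗ (Pi.single ∅ (1:𝕜))).comp Φ.toLinearMap
  have hcomp : ∀ i, Φ (sClGen 𝕜 n μ (fun _ _ => 0) i) = opF μ i := fun i => by
    rw [sClGen]
    show RingQuot.liftAlgHom 𝕜 _ _ = _
    rw [RingQuot.liftAlgHom_mkAlgHom_apply, FreeAlgebra.lift_ι_apply]
  have hEm : ∀ S : Finset (Fin n), ∃ c : 𝕜, c ≠ 0 ∧
      E (mQ 𝕜 n μ S) = c • (Pi.single S 1 : Finset (Fin n) → 𝕜) := by
    intro S
    obtain ⟨c, hc, heq⟩ := prod_opF_single μ hμ (S.sort (· ≤ ·)) (Finset.sortedLT_sort S).pairwise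
    refine ⟨c, hc, ?_⟩
    have h1 : Φ (mQ 𝕜 n μ S) = ((S.sort (· ≤ ·)).map (opF μ)).prod := by
      rw [mQ, map_list_prod, List.map_map]
      congr 1
      exact List.map_congr_left (fun i _ => hcomp i)
    have h2 : E (mQ 𝕜 n μ S) = (Φ (mQ 𝕜 n μ S)) (Pi.single ∅ (1:𝕜)) := rfl
    rw [h2, h1, heq, Finset.sort_toFinset]
  choose c hc hEc using hEm
  have hind : LinearIndependent 𝕜 (mQ 𝕜 n μ) := by
    apply LinearIndependent.of_comp E
    have hfun : E ∘ mQ 𝕜 n μ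
        = (fun S => Units.mk0 (c S) (hc S)) • (Pi.basisFun 𝕜 (Finset (Fin n))) := by
      funext S
      rw [Function.comp_apply, hEc S, Pi.smul_apply', Pi.basisFun_apply]
      rfl
    rw [hfun]
    exact (Pi.basisFun 𝕜 (Finset (Fin n))).linearIndependent.units_smul _
  let b : Module.Basis (Finset (Fin n)) 𝕜 (sCl 𝕜 n μ (fun _ _ => 0)) :=
    Module.Basis.mk hind (by rw [span_mQ_top μ hμ hchar])
  rw [Module.finrank_eq_card_basis b, Fintype.card_finset, Fintype.card_fin]
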